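/- arXiv:2005.02083 — 3 statements merged into one kernel-verified Lean document; each statement's English description precedes it below -/
import Mathlib

section
/- For positive integers m and n with m <= n, the product of q-integers satisfies [m]_q [n]_q = sum over j from 1 to m of q^{j-1} [m + n - 2j + 1]_q, as an identity of polynomials in q. -/
/-- The `q`-integer `[k]_q = 1 + q + ⋯ + q^(k-1)` as a polynomial. -/
noncomputable def qInt (k : ℕ) : Polynomial ℤ := ∑ i ∈ Finset.range k, Polynomial.X ^ i

/-- For `1 ≤ m ≤ n`, `[m]_q [n]_q = ∑_{j=1}^{m} q^(j-1) [m+n-2j+1]_q`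
(here indexed by `j ∈ range m`, representing `j+1`). -/
theorem qInt_mul_expansion (m n : ℕ) (hm : 1 ≤ m) (hmn : m ≤ n) :
    qInt m * qInt n =
      ∑ j ∈ Finset.range m, Polynomial.X ^ j * qInt (m + n - 2 * j - 1) := by
  induction m, hm using Nat.le_induction with
  | base => simp [qInt]
  | succ m hm ih =>
    have hmn' : m ≤ n := by omega
    rw [show qInt (m+1) = qInt m + Polynomial.X ^ m from Finset.sum_range_succ _ m,
        add_mul, ih hmn', Finset.sum_range_succ]
    have h1 : ∀ j ∈ Finset.range m,
        (Polynomial.X : Polynomial ℤ) ^ j * qInt (m + 1 + n - 2 * j - 1) =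
        Polynomial.X ^ j * qInt (m + n - 2 * j - 1)
          + Polynomial.X ^ (n + (m - 1 - j)) := by
      intro j hj
      rw [Finset.mem_range] at hj
      have e1 : m + 1 + n - 2 * j - 1 = (m + n - 2 * j - 1) + 1 := by omega
      rw [e1,
          show qInt ((m + n - 2 * j - 1) + 1)
            = qInt (m + n - 2 * j - 1) + Polynomial.X ^ (m + n - 2 * j - 1) from
            Finset.sum_range_succ _ _,
          mul_add, ← pow_add]
      congr 2
      omega
    rw [Finset.sum_congr rfl h1, Finset.sum_add_distrib, Finset.sum_range_reflect (fun j => (Polynomial.X : Polynomial ℤ) ^ (n + j)) m]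
    have e2 : m + 1 + n - 2 * m - 1 = n - m := by omega
    rw [e2]
    have h2 : Polynomial.X ^ m * qInt n =
        Polynomial.X ^ m * qInt (n - m)
          + ∑ j ∈ Finset.range m, (Polynomial.X : Polynomial ℤ) ^ (n + j) := by
      have hsplit : qInt n
          = qInt (n - m) + ∑ j ∈ Finset.range m, Polynomial.X ^ (n - m + j) := by
        unfold qInt
        conv_lhs => rw [show n = (n - m) + m by omega]
        exact Finset.sum_range_add _ _ _
      rw [hsplit, mul_add, Finset.mul_sum]
      congr 1
      refine Finset.sum_congr rfl fun j hj => ?_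
      rw [Finset.mem_range] at hj
      rw [← pow_add]
      congr 1
      omega
    rw [h2]
    ring
end

section
/- For positive integers k_1, k_2, k_3 with k_1, k_3 >= 2, the polynomial [k_3]_q (1 + q [k_1]_q [k_2]_q) + q^{k_2+k_3} [k_1]_q has a unimodal coefficient sequence. -/
/-- The coefficient sequence of a polynomial weakly increases up to some index `m`
and weakly decreases afterwards. -/
def CoeffUnimodal (p : Polynomial ℤ) : Prop :=
  ∃ m : ℕ, (∀ i j : ℕ, i ≤ j → j ≤ m → p.coeff i ≤ p.coeff j) ∧
    (∀ i j : ℕ, m ≤ i → i ≤ j → p.coeff j ≤ p.coeff i)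

open Polynomial

/-- Closed form for the coefficients of `[a]_q [b]_q`. -/
def eC (a b n : ℕ) : ℤ := max 0 (min (min ((n : ℤ) + 1) a) (min (b : ℤ) (a + b - 1 - n)))

lemma qInt_coeff (k n : ℕ) : (qInt k).coeff n = if n < k then 1 else 0 := by
  simp only [qInt, Polynomial.finset_sum_coeff, Polynomial.coeff_X_pow]
  rw [Finset.sum_ite_eq (Finset.range k) n (fun _ => (1 : ℤ))]
  simp [Finset.mem_range]

lemma qInt_mul_coeff (a b n : ℕ) : (qInt a * qInt b).coeff n = eC a b n := by
  induction a with
  | zero =>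
    simp only [qInt, Finset.range_zero, Finset.sum_empty, zero_mul, Polynomial.coeff_zero, eC]
    omega
  | succ a ih =>
    have hq : qInt (a + 1) = qInt a + Polynomial.X ^ a := by
      simp [qInt, Finset.sum_range_succ]
    rw [hq, add_mul, Polynomial.coeff_add, ih, mul_comm (Polynomial.X ^ a) (qInt b),
      Polynomial.coeff_mul_X_pow', qInt_coeff]
    unfold eC
    split_ifs <;> omega

lemma one_sub_X_mul_qInt (k : ℕ) : (1 - Polynomial.X) * qInt k = 1 - Polynomial.X ^ k := by
  unfold qInt
  linear_combination -(geom_sum_mul (Polynomial.X : Polynomial ℤ) k)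

lemma key_identity (a b c : ℕ) :
    (1 - Polynomial.X) * (qInt c * (1 + Polynomial.X * qInt a * qInt b) +
        Polynomial.X ^ (b + c) * qInt a) =
      1 - Polynomial.X ^ c + (Polynomial.X ^ (b + c) - Polynomial.X ^ (a + b + c)) +
        (Polynomial.X - Polynomial.X ^ (c + 1)) * (qInt a * qInt b) := by
  have h1 : (1 - Polynomial.X) * (qInt c * (1 + Polynomial.X * qInt a * qInt b) +
      Polynomial.X ^ (b + c) * qInt a)
      = ((1 - Polynomial.X) * qInt c) * (1 + Polynomial.X * qInt a * qInt b) +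
        Polynomial.X ^ (b + c) * ((1 - Polynomial.X) * qInt a) := by ring
  rw [h1, one_sub_X_mul_qInt, one_sub_X_mul_qInt]
  ring

lemma diffP (a b c n : ℕ) (P : Polynomial ℤ)
    (hP : P = qInt c * (1 + Polynomial.X * qInt a * qInt b) +
      Polynomial.X ^ (b + c) * qInt a) :
    P.coeff (n + 1) - P.coeff n =
      (if n + 1 = b + c then 1 else 0) - (if n + 1 = c then 1 else 0)
        - (if n + 1 = a + b + c then 1 else 0)
        + eC a b n - (if c ≤ n then eC a b (n - c) else 0) := by
  have hk : (1 - Polynomial.X) * P =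
      1 - Polynomial.X ^ c + (Polynomial.X ^ (b + c) - Polynomial.X ^ (a + b + c)) +
        (Polynomial.X - Polynomial.X ^ (c + 1)) * (qInt a * qInt b) := by
    rw [hP]; exact key_identity a b c
  have h1 := congrArg (fun p => Polynomial.coeff p (n + 1)) hk
  simp only [sub_mul, one_mul, Polynomial.coeff_sub, Polynomial.coeff_X_mul] at h1
  rw [h1]
  rw [mul_comm (Polynomial.X ^ (c + 1)) (qInt a * qInt b)]
  simp only [Polynomial.coeff_add, Polynomial.coeff_sub, Polynomial.coeff_one,
    Polynomial.coeff_X_pow, Polynomial.coeff_X_mul, Polynomial.coeff_mul_X_pow',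
    qInt_mul_coeff]
  have harg : n + 1 - (c + 1) = n - c := by omega
  simp only [Nat.add_le_add_iff_right, harg, Nat.succ_ne_zero, if_false]
  ring

lemma chain_up (f : ℕ → ℤ) (m : ℕ) (h : ∀ n, n < m → f n ≤ f (n + 1)) :
    ∀ i j, i ≤ j → j ≤ m → f i ≤ f j := by
  intro i j
  induction j with
  | zero =>
    intro hij _
    have hi0 : i = 0 := by omega
    subst hi0
    exact le_refl _
  | succ j ih =>
    intro hij hjm
    rcases Nat.lt_or_ge i (j + 1) with h' | h'
    · exact le_trans (ih (by omega) (by omega)) (h j (by omega))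
    · have hij1 : i = j + 1 := by omega
      subst hij1
      exact le_refl _

lemma chain_down (f : ℕ → ℤ) (m : ℕ) (h : ∀ n, m ≤ n → f (n + 1) ≤ f n) :
    ∀ i j, m ≤ i → i ≤ j → f j ≤ f i := by
  intro i j hmi
  induction j with
  | zero =>
    intro hij
    have hi0 : i = 0 := by omega
    subst hi0
    exact le_refl _
  | succ j ih =>
    intro hij
    rcases Nat.lt_or_ge i (j + 1) with h' | h'
    · exact le_trans (h j (by omega)) (ih (by omega))
    · have hij1 : i = j + 1 := by omega
      subst hij1
      exact le_refl _

/-- For `k₁, k₃ ≥ 2` and `k₂ ≥ 1`, the polynomial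
`[k₃]_q (1 + q [k₁]_q [k₂]_q) + q^(k₂+k₃) [k₁]_q` has a unimodal
coefficient sequence. -/
theorem three_segment_unimodal (k₁ k₂ k₃ : ℕ) (h1 : 2 ≤ k₁) (h2 : 1 ≤ k₂) (h3 : 2 ≤ k₃) :
    CoeffUnimodal (qInt k₃ * (1 + Polynomial.X * qInt k₁ * qInt k₂) +
      Polynomial.X ^ (k₂ + k₃) * qInt k₁) := by
  set P := qInt k₃ * (1 + Polynomial.X * qInt k₁ * qInt k₂) +
      Polynomial.X ^ (k₂ + k₃) * qInt k₁ with hP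
  obtain ⟨m, up, down⟩ : ∃ m : ℕ, (∀ n, n < m → P.coeff n ≤ P.coeff (n + 1)) ∧
      (∀ n, m ≤ n → P.coeff (n + 1) ≤ P.coeff n) := by
    refine ⟨if k₁ + k₂ ≤ k₃ then k₃ - 1 else (k₁ + k₂ + k₃) / 2, ?_, ?_⟩
    · intro n hn
      have h := diffP k₁ k₂ k₃ n P hP
      unfold eC at h
      rw [← sub_nonneg, h]
      split_ifs at hn ⊢ <;> omega
    · intro n hn
      have h := diffP k₁ k₂ k₃ n P hP
      unfold eC at h
      rw [← sub_nonpos, h]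
      split_ifs at hn ⊢ <;> omega
  exact ⟨m, chain_up (fun n => P.coeff n) m up, chain_down (fun n => P.coeff n) m down⟩
end

section
/- For n >= 1, the rank sequence of the Fibonacci cube Gamma_n, given by r_j = C(n-j+1, j) for 0 <= j <= ceil(n/2), is unimodal. -/
private lemma fibcube_stepUp (N j : ℕ) (h2 : 2*j + 2 ≤ N)
    (hP : (j+1)*(N-j) ≤ (N-2*j)*(N-2*j-1)) :
    Nat.choose (N - j) j ≤ Nat.choose (N - (j+1)) (j+1) := by
  have hsub : N - (j+1) = N - j - 1 := by omega
  rw [hsub]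
  have hC : Nat.choose (N-j-1) (j+1) * (j+1) = Nat.choose (N-j-1) j * (N-2*j-1) := by
    rw [Nat.choose_succ_right_eq]; congr 1; omega
  have hA : Nat.choose (N-j) (j+1) * (j+1) = Nat.choose (N-j) j * (N-2*j) := by
    rw [Nat.choose_succ_right_eq]; congr 1; omega
  have hB : (N-j) * Nat.choose (N-j-1) j = Nat.choose (N-j) (j+1) * (j+1) := by
    have h := Nat.add_one_mul_choose_eq (N-j-1) j
    have h1 : N-j-1+1 = N - j := by omega
    rw [h1] at h
    simpa using h
  have hcs : Nat.choose (N-j) j * (N-2*j) = (N-j) * Nat.choose (N-j-1) j :=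
    (hB.trans hA).symm
  set a := Nat.choose (N-j-1) j with ha
  set b := Nat.choose (N-j-1) (j+1) with hb
  set c := Nat.choose (N-j) j with hc2
  have hkey : c * ((j+1) * (N-2*j)) ≤ b * ((j+1) * (N-2*j)) := by
    calc c * ((j+1) * (N-2*j)) = (c * (N-2*j)) * (j+1) := by ring
      _ = ((N-j) * a) * (j+1) := by rw [hcs]
      _ = ((j+1)*(N-j)) * a := by ring
      _ ≤ ((N-2*j)*(N-2*j-1)) * a := Nat.mul_le_mul_right a hP
      _ = (a * (N-2*j-1)) * (N-2*j) := by ring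
      _ = (b * (j+1)) * (N-2*j) := by rw [hC]
      _ = b * ((j+1) * (N-2*j)) := by ring
  exact Nat.le_of_mul_le_mul_right hkey (Nat.mul_pos (by omega) (by omega))

private lemma fibcube_stepDown (N j : ℕ) (h2 : 2*j + 2 ≤ N)
    (hP : ¬ ((j+1)*(N-j) ≤ (N-2*j)*(N-2*j-1))) :
    Nat.choose (N - (j+1)) (j+1) ≤ Nat.choose (N - j) j := by
  push_neg at hP
  have hsub : N - (j+1) = N - j - 1 := by omega
  rw [hsub]
  have hC : Nat.choose (N-j-1) (j+1) * (j+1) = Nat.choose (N-j-1) j * (N-2*j-1) := by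
    rw [Nat.choose_succ_right_eq]; congr 1; omega
  have hA : Nat.choose (N-j) (j+1) * (j+1) = Nat.choose (N-j) j * (N-2*j) := by
    rw [Nat.choose_succ_right_eq]; congr 1; omega
  have hB : (N-j) * Nat.choose (N-j-1) j = Nat.choose (N-j) (j+1) * (j+1) := by
    have h := Nat.add_one_mul_choose_eq (N-j-1) j
    have h1 : N-j-1+1 = N - j := by omega
    rw [h1] at h
    simpa using h
  have hcs : Nat.choose (N-j) j * (N-2*j) = (N-j) * Nat.choose (N-j-1) j :=
    (hB.trans hA).symm
  set a := Nat.choose (N-j-1) j with ha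
  set b := Nat.choose (N-j-1) (j+1) with hb
  set c := Nat.choose (N-j) j with hc2
  have hkey : b * ((j+1) * (N-2*j)) ≤ c * ((j+1) * (N-2*j)) := by
    calc b * ((j+1) * (N-2*j)) = (b * (j+1)) * (N-2*j) := by ring
      _ = (a * (N-2*j-1)) * (N-2*j) := by rw [hC]
      _ = ((N-2*j)*(N-2*j-1)) * a := by ring
      _ ≤ ((j+1)*(N-j)) * a := Nat.mul_le_mul_right a hP.le
      _ = ((N-j) * a) * (j+1) := by ring
      _ = (c * (N-2*j)) * (j+1) := by rw [hcs]
      _ = c * ((j+1) * (N-2*j)) := by ring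
  exact Nat.le_of_mul_le_mul_right hkey (Nat.mul_pos (by omega) (by omega))

private lemma fibcube_mono1 (N x y : ℕ) (hxy : x ≤ y) (h2 : 2*y + 2 ≤ N) :
    (x+1)*(N-x) ≤ (y+1)*(N-y) := by
  have hc : N - x = (N - y) + (y - x) := by omega
  have h1 : x + 1 ≤ N - y := by omega
  calc (x+1)*(N-x) = (x+1)*(N-y) + (x+1)*(y-x) := by rw [hc]; ring
    _ ≤ (x+1)*(N-y) + (N-y)*(y-x) :=
        Nat.add_le_add_left (Nat.mul_le_mul_right _ h1) _
    _ = ((x+1)+(y-x))*(N-y) := by ring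
    _ = (y+1)*(N-y) := by congr 1; omega

/-- For `n ≥ 1`, the rank sequence `r j = C(n - j + 1, j)`, `0 ≤ j ≤ ⌈n/2⌉`,
of the Fibonacci cube `Γₙ` is unimodal. -/
theorem fibonacci_cube_rank_unimodal (n : ℕ) (hn : 1 ≤ n) :
    ∃ m : ℕ, m ≤ (n + 1) / 2 ∧
      (∀ i j : ℕ, i ≤ j → j ≤ m →
        Nat.choose (n + 1 - i) i ≤ Nat.choose (n + 1 - j) j) ∧
      (∀ i j : ℕ, m ≤ i → i ≤ j → j ≤ (n + 1) / 2 →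
        Nat.choose (n + 1 - j) j ≤ Nat.choose (n + 1 - i) i) := by
  set N := n + 1 with hNdef
  have hhalf : ¬ ((N/2+1)*(N-N/2) ≤ (N-2*(N/2))*(N-2*(N/2)-1)) := by
    have h0 : (N - 2*(N/2)) * (N - 2*(N/2) - 1) = 0 := by
      have h : N - 2*(N/2) = 0 ∨ N - 2*(N/2) = 1 := by omega
      rcases h with h | h <;> rw [h] <;> simp
    rw [h0]
    have hpos : 0 < (N/2+1) * (N - N/2) := Nat.mul_pos (by omega) (by omega)
    omega
  have hex : ∃ j, ¬ ((j+1)*(N-j) ≤ (N-2*j)*(N-2*j-1)) := ⟨N/2, hhalf⟩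
  set m := Nat.find hex with hm
  have hmle : m ≤ N / 2 := Nat.find_min' hex hhalf
  have hup : ∀ k, k < m → Nat.choose (N - k) k ≤ Nat.choose (N - (k+1)) (k+1) := by
    intro k hk
    have hPk := Nat.find_min hex hk
    push_neg at hPk
    exact fibcube_stepUp N k (by omega) hPk
  have hdown : ∀ k, m ≤ k → 2*k + 2 ≤ N →
      Nat.choose (N - (k+1)) (k+1) ≤ Nat.choose (N - k) k := by
    intro k hmk hk2
    refine fibcube_stepDown N k hk2 ?_
    intro hPk
    apply Nat.find_spec hex
    calc (m+1)*(N-m) ≤ (k+1)*(N-k) := fibcube_mono1 N m k hmk hk2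
      _ ≤ (N-2*k)*(N-2*k-1) := hPk
      _ ≤ (N-2*m)*(N-2*m-1) := Nat.mul_le_mul (by omega) (by omega)
  refine ⟨m, hmle, ?_, ?_⟩
  · intro i j hij hjm
    induction j, hij using Nat.le_induction with
    | base => exact le_rfl
    | succ j hij ih =>
      exact (ih (by omega)).trans (hup j (by omega))
  · intro i j hmi hij hjh
    induction j, hij using Nat.le_induction with
    | base => exact le_rfl
    | succ j hij ih =>
      exact (hdown j (le_trans hmi hij) (by omega)).trans (ih (by omega))
end
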